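/- arXiv:0911.0286 — 2 statements merged into one kernel-verified Lean document; each statement's English description precedes it below -/
import Mathlib

section
/- Let F(x) ∈ 𝓞[x] be a monic irreducible polynomial of degree n with root θ ∈ K̄, of depth r ≥ 1, and let [F_1, …, F_r] be an Okutsu frame of F. Then F_1(x) is irreducible modulo 𝔪, m_1 divides n, and F(x) ≡ F_1(x)^{n/m_1} (mod 𝔪). -/
open Polynomial

noncomputable section

/-- A local field `K` of characteristic zero, presented through the canonical extension `v`
of its normalized discrete valuation (additively written, `v(K*) = ℤ`) to a fixed algebraic
closure of `K`.  The axioms state that `v` is an additive valuation on the algebraic closure,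
that its restriction to `K` is a surjective discrete valuation onto `ℤ` (plus `⊤` at `0`),
that it is invariant under `K`-automorphisms (a property of the canonical extension), that
`K` is complete and that its residue field is finite. -/
structure OkutsuSetup (K : Type) [Field K] [CharZero K] : Type where
  v : AlgebraicClosure K → WithTop ℚ
  v_eq_top_iff : ∀ x, v x = ⊤ ↔ x = 0
  v_mul : ∀ x y, v (x * y) = v x + v y
  v_min_le_add : ∀ x y, min (v x) (v y) ≤ v (x + y)
  v_neg : ∀ x, v (-x) = v x
  v_one : v 1 = 0
  v_base_int : ∀ x : K, x ≠ 0 →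
    ∃ k : ℤ, v (algebraMap K (AlgebraicClosure K) x) = ((k : ℚ) : WithTop ℚ)
  v_base_one : ∃ x : K, v (algebraMap K (AlgebraicClosure K) x) = ((1 : ℚ) : WithTop ℚ)
  v_aut_invariant : ∀ (M : IntermediateField K (AlgebraicClosure K)) (σ : ↥M ≃ₐ[K] ↥M)
    (x : ↥M), v ((σ x : ↥M) : AlgebraicClosure K) = v ((x : ↥M) : AlgebraicClosure K)
  complete : ∀ a : ℕ → K,
    (∀ N : ℚ, ∃ M : ℕ, ∀ p q : ℕ, M ≤ p → M ≤ q →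
      ((N : ℚ) : WithTop ℚ) < v (algebraMap K (AlgebraicClosure K) (a p - a q))) →
    ∃ b : K, ∀ N : ℚ, ∃ M : ℕ, ∀ p : ℕ, M ≤ p →
      ((N : ℚ) : WithTop ℚ) < v (algebraMap K (AlgebraicClosure K) (a p - b))
  finite_residue : ∃ T : Finset K, ∀ x : K,
    0 ≤ v (algebraMap K (AlgebraicClosure K) x) →
    ∃ y ∈ T, 0 < v (algebraMap K (AlgebraicClosure K) (x - y))

namespace OkutsuSetup

variable {K : Type} [Field K] [CharZero K]

/-- The valuation of `K` itself. -/
def vK (S : OkutsuSetup K) (x : K) : WithTop ℚ :=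
  S.v (algebraMap K (AlgebraicClosure K) x)

/-- The ring of integers `𝓞` of `K`. -/
def integers (S : OkutsuSetup K) : Subring K where
  carrier := {x : K | 0 ≤ S.vK x}
  zero_mem' := by
    show (0 : WithTop ℚ) ≤ S.vK 0
    unfold vK
    rw [map_zero, (S.v_eq_top_iff 0).mpr rfl]
    exact le_top
  one_mem' := by
    show (0 : WithTop ℚ) ≤ S.vK 1
    unfold vK
    rw [map_one, S.v_one]
  add_mem' := by
    intro a b ha hb
    show (0 : WithTop ℚ) ≤ S.vK (a + b)
    unfold vK
    rw [map_add]
    exact le_trans (le_min ha hb) (S.v_min_le_add _ _)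
  mul_mem' := by
    intro a b ha hb
    show (0 : WithTop ℚ) ≤ S.vK (a * b)
    unfold vK
    rw [map_mul, S.v_mul]
    exact add_nonneg ha hb
  neg_mem' := by
    intro a ha
    show (0 : WithTop ℚ) ≤ S.vK (-a)
    unfold vK
    rw [map_neg, S.v_neg]
    exact ha

/-- The maximal ideal `𝔪` of the ring of integers of `K`. -/
def maximalIdeal (S : OkutsuSetup K) : Ideal S.integers where
  carrier := {x : S.integers | 0 < S.vK (x : K)}
  zero_mem' := by
    show (0 : WithTop ℚ) < S.vK ((0 : S.integers) : K)
    have h0 : ((0 : S.integers) : K) = (0 : K) := rfl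
    rw [h0]
    unfold vK
    rw [map_zero, (S.v_eq_top_iff 0).mpr rfl]
    exact WithTop.coe_lt_top 0
  add_mem' := by
    intro a b ha hb
    show (0 : WithTop ℚ) < S.vK ((a : K) + (b : K))
    refine lt_of_lt_of_le (lt_min ha hb) ?_
    unfold vK
    rw [map_add]
    exact S.v_min_le_add _ _
  smul_mem' := by
    intro c x hx
    show (0 : WithTop ℚ) < S.vK ((c : K) * (x : K))
    unfold vK
    rw [map_mul, S.v_mul]
    calc (0 : WithTop ℚ) < S.v (algebraMap K (AlgebraicClosure K) (x : K)) := hx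
    _ ≤ _ + _ := le_add_of_nonneg_left c.2

/-- The residue field `𝓞/𝔪` of `K`. -/
abbrev Residue (S : OkutsuSetup K) : Type :=
  S.integers ⧸ S.maximalIdeal

/-- The residue characteristic of `K`. -/
def resChar (S : OkutsuSetup K) : ℕ :=
  ringChar S.Residue

/-- Reduction of a polynomial with integer coefficients modulo `𝔪`. -/
def reduce (S : OkutsuSetup K) (F : Polynomial S.integers) : Polynomial S.Residue :=
  F.map (Ideal.Quotient.mk S.maximalIdeal)

/-- Evaluation of a polynomial with coefficients in `𝓞` at a point of the algebraic
closure of `K`. -/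
def evalK (S : OkutsuSetup K) (F : Polynomial S.integers) (θ : AlgebraicClosure K) :
    AlgebraicClosure K :=
  Polynomial.aeval θ (F.map S.integers.subtype)

/-- `v(g)` for a polynomial `g`: the minimum of the valuations of its coefficients. -/
def vPoly (S : OkutsuSetup K) (g : Polynomial S.integers) : WithTop ℚ :=
  (Finset.range (g.natDegree + 1)).inf fun i => S.vK ((g.coeff i : K))

/-- The ramification index `e(E/K)` of a finite subextension `E` of `K̄/K`: the least
positive integer `e` such that all values of `v` on `E*` lie in `(1/e)ℤ`. -/
def ramIdx (S : OkutsuSetup K) (E : IntermediateField K (AlgebraicClosure K)) : ℕ :=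
  sInf {e : ℕ | 0 < e ∧ ∀ x ∈ E, x ≠ (0 : AlgebraicClosure K) →
    ∃ k : ℤ, S.v x = (((k : ℚ) / (e : ℚ) : ℚ) : WithTop ℚ)}

/-- The residual degree `f(E/K)` of a finite subextension `E` of `K̄/K`; since `K` is a
complete discretely valued field, `[E : K] = e(E/K)·f(E/K)`. -/
def resDeg (S : OkutsuSetup K) (E : IntermediateField K (AlgebraicClosure K)) : ℕ :=
  Module.finrank K E / S.ramIdx E

/-- A subextension `E/K` is tamely ramified when its ramification index is prime to the
residue characteristic of `K`. -/
def IsTame (S : OkutsuSetup K) (E : IntermediateField K (AlgebraicClosure K)) : Prop :=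
  Nat.Coprime (S.ramIdx E) S.resChar

/-- The Okutsu invariants `m_0 = 1 ≤ m_1 < ⋯ < m_r < m_{r+1} = n` and
`μ_0 = 0 < μ_1 < ⋯ < μ_r < μ_{r+1} = ∞` of a monic irreducible polynomial of degree `n`
with root `θ`:  `m i` is the least `[K(η):K]` over `η` with `v(θ-η) > μ (i-1)`, and
`μ i` is the greatest value of `v(θ-η)` over `η` with `[K(η):K] = m i`.
`r` is the depth: the number of indices `i ≥ 1` with `m i < n`. -/
structure OkutsuData (S : OkutsuSetup K) (θ : AlgebraicClosure K) (n : ℕ) : Type where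
  r : ℕ
  m : ℕ → ℕ
  μ : ℕ → WithTop ℚ
  m_zero : m 0 = 1
  mu_zero : μ 0 = 0
  m_isLeast : ∀ i, 1 ≤ i → i ≤ r + 1 →
    IsLeast {d : ℕ | ∃ η : AlgebraicClosure K,
      (minpoly K η).natDegree = d ∧ μ (i - 1) < S.v (θ - η)} (m i)
  mu_isGreatest : ∀ i, 1 ≤ i → i ≤ r + 1 →
    IsGreatest {c : WithTop ℚ | ∃ η : AlgebraicClosure K,
      (minpoly K η).natDegree = m i ∧ S.v (θ - η) = c} (μ i)
  m_lt_n : ∀ i, 1 ≤ i → i ≤ r → m i < n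
  m_last : m (r + 1) = n

/-- `[F_1, …, F_r]` is an Okutsu frame of the monic irreducible polynomial with root `θ`
and Okutsu invariants `D`: for each `1 ≤ i ≤ r`, `F_i` is the minimal polynomial of some
`α_i ∈ K̄` with `[K(α_i):K] = m_i` and `v(θ - α_i) = μ_i`. -/
def IsFrame (S : OkutsuSetup K) {θ : AlgebraicClosure K} {n : ℕ} (D : OkutsuData S θ n)
    (Fr : ℕ → Polynomial S.integers) : Prop :=
  ∀ i, 1 ≤ i → i ≤ D.r → ∃ α : AlgebraicClosure K,
    (minpoly K α).natDegree = D.m i ∧ S.v (θ - α) = D.μ i ∧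
      (Fr i).map S.integers.subtype = minpoly K α

/-- `φ` is a Montes approximation to the monic irreducible polynomial `F`:  a monic
irreducible polynomial of the same degree `n` having a root `α` with `v(θ - α) > μ_r`,
where `θ` is a root of `F`. -/
def IsMontesApprox (S : OkutsuSetup K) (F φ : Polynomial S.integers) : Prop :=
  φ.Monic ∧ Irreducible (φ.map S.integers.subtype) ∧ φ.natDegree = F.natDegree ∧
    ∃ θ : AlgebraicClosure K, S.evalK F θ = 0 ∧
      ∃ D : OkutsuData S θ F.natDegree, ∃ α : AlgebraicClosure K,
        S.evalK φ α = 0 ∧ D.μ D.r < S.v (θ - α)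

end OkutsuSetup


set_option maxHeartbeats 1000000
set_option synthInstance.maxHeartbeats 400000

namespace OkutsuSetup

variable {K : Type} [Field K] [CharZero K] (S : OkutsuSetup K)

local notation "𝔸" => AlgebraicClosure K

lemma v_zero : S.v 0 = ⊤ := (S.v_eq_top_iff 0).mpr rfl

lemma zero_lt_top' : (0 : WithTop ℚ) < ⊤ := lt_top_iff_ne_top.mpr (by simp)

lemma v_zero_pos : (0 : WithTop ℚ) < S.v 0 := by rw [S.v_zero]; exact zero_lt_top'

lemma v_add_pos {x y : 𝔸} (hx : 0 < S.v x) (hy : 0 < S.v y) : 0 < S.v (x + y) :=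
  lt_of_lt_of_le (lt_min hx hy) (S.v_min_le_add x y)

lemma v_add_nonneg {x y : 𝔸} (hx : 0 ≤ S.v x) (hy : 0 ≤ S.v y) : 0 ≤ S.v (x + y) :=
  le_trans (le_min hx hy) (S.v_min_le_add x y)

lemma v_sum_pos {ι : Type*} (s : Finset ι) (f : ι → 𝔸) (h : ∀ i ∈ s, 0 < S.v (f i)) :
    0 < S.v (∑ i ∈ s, f i) := by
  induction s using Finset.cons_induction with
  | empty => rw [Finset.sum_empty]; exact S.v_zero_pos
  | cons a s ha ih =>
      rw [Finset.sum_cons]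
      exact S.v_add_pos (h _ (Finset.mem_cons_self _ _))
        (ih fun i hi => h i (Finset.mem_cons_of_mem hi))

lemma le_v_sum {ι : Type*} (s : Finset ι) (f : ι → 𝔸) (b : WithTop ℚ)
    (h : ∀ i ∈ s, b ≤ S.v (f i)) : b ≤ S.v (∑ i ∈ s, f i) := by
  induction s using Finset.cons_induction with
  | empty => rw [Finset.sum_empty, S.v_zero]; exact le_top
  | cons a s ha ih =>
      rw [Finset.sum_cons]
      exact le_trans (le_min (h _ (Finset.mem_cons_self _ _))
        (ih fun i hi => h i (Finset.mem_cons_of_mem hi))) (S.v_min_le_add _ _)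

lemma v_multiset_prod_nonneg (s : Multiset 𝔸) (h : ∀ x ∈ s, 0 ≤ S.v x) : 0 ≤ S.v s.prod := by
  induction s using Multiset.induction with
  | empty => rw [Multiset.prod_zero, S.v_one]
  | cons a s ih =>
      rw [Multiset.prod_cons, S.v_mul]
      exact add_nonneg (h a (Multiset.mem_cons_self _ _))
        (ih fun x hx => h x (Multiset.mem_cons_of_mem hx))

lemma v_multiset_prod_eq_zero (s : Multiset 𝔸) (h : ∀ x ∈ s, S.v x = 0) : S.v s.prod = 0 := by
  induction s using Multiset.induction with
  | empty => rw [Multiset.prod_zero, S.v_one]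
  | cons a s ih =>
      rw [Multiset.prod_cons, S.v_mul, h a (Multiset.mem_cons_self _ _),
        ih fun x hx => h x (Multiset.mem_cons_of_mem hx), add_zero]

lemma exists_pos_of_v_prod_pos (s : Multiset 𝔸) (h0 : ∀ x ∈ s, 0 ≤ S.v x)
    (h : 0 < S.v s.prod) : ∃ x ∈ s, 0 < S.v x := by
  by_contra hc
  push_neg at hc
  rw [S.v_multiset_prod_eq_zero s fun x hx => le_antisymm (hc x hx) (h0 x hx)] at h
  exact lt_irrefl _ h

lemma v_prod_pos_of_mem (s : Multiset 𝔸) {y : 𝔸} (hy : y ∈ s) (hypos : 0 < S.v y)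
    (h0 : ∀ x ∈ s, 0 ≤ S.v x) : 0 < S.v s.prod := by
  classical
  rw [← Multiset.cons_erase hy, Multiset.prod_cons, S.v_mul]
  have hrest : 0 ≤ S.v ((s.erase y).prod) :=
    S.v_multiset_prod_nonneg _ fun x hx => h0 x (Multiset.mem_of_mem_erase hx)
  exact lt_of_lt_of_le hypos (le_add_of_nonneg_right hrest)

lemma v_pow_eq (x : 𝔸) (c : ℚ) (hx : S.v x = (c : WithTop ℚ)) (k : ℕ) :
    S.v (x ^ k) = (((k : ℚ) * c : ℚ) : WithTop ℚ) := by
  induction k with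
  | zero => rw [pow_zero, S.v_one]; norm_num
  | succ k ih =>
      rw [pow_succ, S.v_mul, ih, hx, ← WithTop.coe_add]
      congr 1
      push_cast
      ring

lemma v_pow_nonneg {x : 𝔸} (hx : 0 ≤ S.v x) (k : ℕ) : 0 ≤ S.v (x ^ k) := by
  induction k with
  | zero => rw [pow_zero, S.v_one]
  | succ k ih => rw [pow_succ, S.v_mul]; exact add_nonneg ih hx

lemma v_root_nonneg (p : Polynomial 𝔸) (hm : p.Monic)
    (hc : ∀ i, 0 ≤ S.v (p.coeff i)) {y : 𝔸} (hy : p.eval y = 0) : 0 ≤ S.v y := by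
  by_contra hneg
  push_neg at hneg
  have hy0 : y ≠ 0 := by
    intro h; rw [h, S.v_zero] at hneg; exact not_top_lt hneg
  obtain ⟨c, hcv⟩ := WithTop.ne_top_iff_exists.mp (ne_top_of_lt hneg)
  have hcneg : c < 0 := by rw [← hcv] at hneg; exact_mod_cast hneg
  set n := p.natDegree with hn
  have hn1 : 1 ≤ n := by
    rcases Nat.eq_zero_or_pos n with h0 | h1
    · rw [hm.natDegree_eq_zero.mp h0] at hy
      simp at hy
    · exact h1
  have hev := Polynomial.eval_eq_sum_range (p := p) y
  rw [hy, Finset.sum_range_succ, ← hn, hm.coeff_natDegree, one_mul] at hev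
  have hyn : y ^ n = -∑ i ∈ Finset.range n, p.coeff i * y ^ i :=
    eq_neg_of_add_eq_zero_right hev.symm
  have h1 : S.v (y ^ n) = (((n : ℚ) * c : ℚ) : WithTop ℚ) := S.v_pow_eq y c hcv.symm n
  have h2 : ((((n : ℚ) - 1) * c : ℚ) : WithTop ℚ) ≤ S.v (y ^ n) := by
    rw [hyn, S.v_neg]
    refine S.le_v_sum _ _ _ ?_
    intro i hi
    rw [S.v_mul, S.v_pow_eq y c hcv.symm i]
    have hile : (i : ℚ) ≤ (n : ℚ) - 1 := by
      have h' := Finset.mem_range.mp hi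
      have h'' : (i : ℚ) + 1 ≤ (n : ℚ) := by exact_mod_cast Nat.succ_le_of_lt h'
      linarith
    have hq : ((n : ℚ) - 1) * c ≤ (i : ℚ) * c :=
      mul_le_mul_of_nonpos_right hile (le_of_lt hcneg)
    calc ((((n : ℚ) - 1) * c : ℚ) : WithTop ℚ) ≤ (((i : ℚ) * c : ℚ) : WithTop ℚ) := by
          exact_mod_cast hq
      _ ≤ S.v (p.coeff i) + (((i : ℚ) * c : ℚ) : WithTop ℚ) := le_add_of_nonneg_left (hc i)
  rw [h1] at h2
  have h3 : ((n : ℚ) - 1) * c ≤ (n : ℚ) * c := by exact_mod_cast h2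
  have hexp : ((n : ℚ) - 1) * c = (n : ℚ) * c - c := by ring
  rw [hexp] at h3
  linarith

/-- The valuation subring of the algebraic closure. -/
def OC : Subring (AlgebraicClosure K) where
  carrier := {x : AlgebraicClosure K | 0 ≤ S.v x}
  zero_mem' := by simp only [Set.mem_setOf_eq]; rw [S.v_zero]; exact le_top
  one_mem' := by simp only [Set.mem_setOf_eq, S.v_one]; exact le_refl _
  add_mem' := fun ha hb => S.v_add_nonneg ha hb
  mul_mem' := fun ha hb => by
    simp only [Set.mem_setOf_eq] at *
    rw [S.v_mul]; exact add_nonneg ha hb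
  neg_mem' := fun ha => by
    simp only [Set.mem_setOf_eq] at *
    rw [S.v_neg]; exact ha

lemma mem_OC {x : 𝔸} : x ∈ S.OC ↔ 0 ≤ S.v x := Iff.rfl

/-- The maximal ideal of `OC`. -/
def mC : Ideal S.OC where
  carrier := {x : S.OC | 0 < S.v (x : 𝔸)}
  zero_mem' := by
    show (0 : WithTop ℚ) < S.v ((0 : S.OC) : 𝔸)
    exact S.v_zero_pos
  add_mem' := by
    intro a b ha hb
    show (0 : WithTop ℚ) < S.v ((a : 𝔸) + (b : 𝔸))
    exact S.v_add_pos ha hb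
  smul_mem' := by
    intro c x hx
    show (0 : WithTop ℚ) < S.v ((c : 𝔸) * (x : 𝔸))
    rw [S.v_mul]
    exact lt_of_lt_of_le hx (le_add_of_nonneg_left c.2)

lemma mem_mC {x : S.OC} : x ∈ S.mC ↔ 0 < S.v (x : 𝔸) := Iff.rfl

lemma mem_maximalIdeal {x : S.integers} : x ∈ S.maximalIdeal ↔ 0 < S.vK (x : K) := Iff.rfl

lemma v_inv_add {x : 𝔸} (hx : x ≠ 0) : S.v x + S.v x⁻¹ = 0 := by
  rw [← S.v_mul, mul_inv_cancel₀ hx, S.v_one]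

lemma mC_isMaximal : S.mC.IsMaximal := by
  rw [Ideal.isMaximal_iff]
  constructor
  · show ¬(0 : WithTop ℚ) < S.v ((1 : S.OC) : 𝔸)
    rw [show ((1 : S.OC) : 𝔸) = 1 from rfl, S.v_one]
    exact lt_irrefl 0
  · rintro J x hJ hx hxJ
    have hx0 : S.v (x : 𝔸) = 0 := le_antisymm (not_lt.mp hx) x.2
    have hxne : (x : 𝔸) ≠ 0 := by
      intro h
      rw [h, S.v_zero] at hx0
      exact (by simp : (⊤ : WithTop ℚ) ≠ 0) hx0
    have hinv : S.v ((x : 𝔸)⁻¹) = 0 := by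
      have h := S.v_inv_add hxne
      rw [hx0, zero_add] at h
      exact h
    have hmem : ((x : 𝔸)⁻¹) ∈ S.OC := le_of_eq hinv.symm
    have hone : (⟨(x : 𝔸)⁻¹, hmem⟩ : S.OC) * x = 1 := by
      apply Subtype.ext
      show (x : 𝔸)⁻¹ * (x : 𝔸) = 1
      exact inv_mul_cancel₀ hxne
    rw [← hone]
    exact J.mul_mem_left _ hxJ

lemma maximalIdeal_isMaximal : S.maximalIdeal.IsMaximal := by
  rw [Ideal.isMaximal_iff]
  constructor
  · show ¬(0 : WithTop ℚ) < S.vK ((1 : S.integers) : K)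
    show ¬(0 : WithTop ℚ) < S.v (algebraMap K (AlgebraicClosure K) ((1 : S.integers) : K))
    rw [show (((1 : S.integers)) : K) = 1 from rfl, map_one, S.v_one]
    exact lt_irrefl 0
  · rintro J x hJ hx hxJ
    have hx0 : S.vK (x : K) = 0 := le_antisymm (not_lt.mp hx) x.2
    have hxne : (x : K) ≠ 0 := by
      intro h
      have h2 : S.vK (0 : K) = 0 := h ▸ hx0
      unfold vK at h2
      rw [map_zero, S.v_zero] at h2
      exact (by simp : (⊤ : WithTop ℚ) ≠ 0) h2
    have hinv : S.vK ((x : K)⁻¹) = 0 := by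
      have h : S.vK (x : K) + S.vK ((x : K)⁻¹) = 0 := by
        unfold vK
        rw [← S.v_mul, ← map_mul, mul_inv_cancel₀ hxne, map_one, S.v_one]
      rw [hx0, zero_add] at h
      exact h
    have hmem : ((x : K)⁻¹) ∈ S.integers := le_of_eq hinv.symm
    have hone : (⟨(x : K)⁻¹, hmem⟩ : S.integers) * x = 1 := by
      apply Subtype.ext
      show (x : K)⁻¹ * (x : K) = 1
      exact inv_mul_cancel₀ hxne
    rw [← hone]
    exact J.mul_mem_left _ hxJ

/-- The inclusion of the ring of integers of `K` into `OC`. -/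
def toOC : S.integers →+* S.OC :=
  RingHom.codRestrict ((algebraMap K (AlgebraicClosure K)).comp S.integers.subtype) S.OC
    fun x => x.2

lemma coe_toOC (x : S.integers) : ((S.toOC x : S.OC) : 𝔸) = algebraMap K 𝔸 (x : K) := rfl

/-- The residue map at the level of `OC`. -/
def barC : S.OC →+* S.OC ⧸ S.mC := Ideal.Quotient.mk S.mC

/-- The inclusion of residue fields. -/
def resMap : S.Residue →+* S.OC ⧸ S.mC :=
  Ideal.Quotient.lift S.maximalIdeal (S.barC.comp S.toOC) (by
    intro a ha
    show Ideal.Quotient.mk S.mC (S.toOC a) = 0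
    rw [Ideal.Quotient.eq_zero_iff_mem]
    show (0 : WithTop ℚ) < S.v ((S.toOC a : S.OC) : 𝔸)
    rw [S.coe_toOC]
    exact ha)

lemma resMap_mk (a : S.integers) :
    S.resMap (Ideal.Quotient.mk S.maximalIdeal a) = S.barC (S.toOC a) :=
  Ideal.Quotient.lift_mk _ _ _

lemma resMap_comp_mk :
    S.resMap.comp (Ideal.Quotient.mk S.maximalIdeal) = S.barC.comp S.toOC :=
  RingHom.ext fun a => S.resMap_mk a

lemma exists_monic_preimage {R : Type*} [CommRing R] (I : Ideal R) [Nontrivial (R ⧸ I)]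
    (q : Polynomial (R ⧸ I)) (hq : q.Monic) :
    ∃ g : Polynomial R, g.Monic ∧ g.map (Ideal.Quotient.mk I) = q ∧ g.natDegree = q.natDegree := by
  have hl : q ∈ Polynomial.lifts (Ideal.Quotient.mk I) := by
    rw [Polynomial.lifts_iff_coeff_lifts]
    intro n
    exact Ideal.Quotient.mk_surjective _
  obtain ⟨g, h1, h2, h3⟩ := Polynomial.lifts_and_degree_eq_and_monic hl hq
  exact ⟨g, h3, h1, Polynomial.natDegree_eq_of_degree_eq h2⟩

/-- The canonical map `𝓞 → K̄`. -/
def fKA : S.integers →+* AlgebraicClosure K :=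
  (algebraMap K (AlgebraicClosure K)).comp S.integers.subtype

lemma OCsubtype_comp_toOC : S.OC.subtype.comp S.toOC = S.fKA := RingHom.ext fun _ => rfl

lemma v_fKA_nonneg (c : S.integers) : 0 ≤ S.v (S.fKA c) := c.2

lemma v_fKA_pos {c : S.integers} (hc : c ∈ S.maximalIdeal) : 0 < S.v (S.fKA c) := hc

lemma eval_toOC_coe (P : Polynomial S.integers) (x : S.OC) :
    ((Polynomial.eval x (P.map S.toOC) : S.OC) : AlgebraicClosure K)
      = Polynomial.eval₂ S.fKA (x : AlgebraicClosure K) P := by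
  show S.OC.subtype (Polynomial.eval x (P.map S.toOC)) = _
  rw [Polynomial.eval_map, Polynomial.hom_eval₂, S.OCsubtype_comp_toOC]
  rfl

lemma eval_reduce_resMap (P : Polynomial S.integers) (x : S.OC) :
    Polynomial.eval (S.barC x) ((S.reduce P).map S.resMap)
      = S.barC (Polynomial.eval x (P.map S.toOC)) := by
  unfold reduce
  rw [Polynomial.map_map, S.resMap_comp_mk, ← Polynomial.map_map, Polynomial.eval_map,
    Polynomial.eval₂_at_apply]

lemma v_eval₂_pos_of_coeff_mem (P : Polynomial S.integers)
    (hP : ∀ i, P.coeff i ∈ S.maximalIdeal) {t : 𝔸} (ht : 0 ≤ S.v t) :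
    0 < S.v (Polynomial.eval₂ S.fKA t P) := by
  rw [Polynomial.eval₂_eq_sum_range]
  refine S.v_sum_pos _ _ ?_
  intro i _
  rw [S.v_mul]
  exact lt_of_lt_of_le (S.v_fKA_pos (hP i)) (le_add_of_nonneg_right (S.v_pow_nonneg ht i))

lemma eval₂_eq_prod_roots (P : Polynomial S.integers) (hm : P.Monic) (t : 𝔸) :
    Polynomial.eval₂ S.fKA t P
      = (((P.map S.fKA).roots).map (fun a => t - a)).prod := by
  have hms : (P.map S.fKA).Monic := hm.map _
  have hsp : (P.map S.fKA).Splits := IsAlgClosed.splits _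
  rw [Polynomial.eval₂_eq_eval_map]
  conv_lhs => rw [hsp.eq_prod_roots_of_monic hms]
  rw [Polynomial.eval_multiset_prod, Multiset.map_map]
  congr 1
  apply Multiset.map_congr rfl
  intro a _
  simp

lemma root_nonneg_of_mem_roots (P : Polynomial S.integers) (hm : P.Monic) {a : 𝔸}
    (ha : a ∈ (P.map S.fKA).roots) : 0 ≤ S.v a := by
  have h := Polynomial.mem_roots'.mp ha
  refine S.v_root_nonneg _ (hm.map _) ?_ h.2
  intro i
  rw [Polynomial.coeff_map]
  exact S.v_fKA_nonneg _

lemma minpoly_natDegree_le_of_root (P : Polynomial S.integers) (hm : P.Monic) {a : 𝔸}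
    (ha : a ∈ (P.map S.fKA).roots) : (minpoly K a).natDegree ≤ P.natDegree := by
  have h := (Polynomial.mem_roots'.mp ha).2
  have haev : Polynomial.aeval a (P.map S.integers.subtype) = 0 := by
    rw [Polynomial.aeval_def, ← Polynomial.eval_map, Polynomial.map_map]
    exact h
  have hdvd : minpoly K a ∣ P.map S.integers.subtype := minpoly.dvd K a haev
  have hne : P.map S.integers.subtype ≠ 0 := ((hm.map _).ne_zero)
  calc (minpoly K a).natDegree ≤ (P.map S.integers.subtype).natDegree :=
        Polynomial.natDegree_le_of_dvd hdvd hne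
    _ = P.natDegree := hm.natDegree_map _

lemma mem_roots_of_aeval (P : Polynomial S.integers) (hm : P.Monic) {a : 𝔸}
    (ha : Polynomial.aeval a (P.map S.integers.subtype) = 0) : a ∈ (P.map S.fKA).roots := by
  rw [Polynomial.mem_roots']
  refine ⟨(hm.map S.fKA).ne_zero, ?_⟩
  show Polynomial.eval a (P.map S.fKA) = 0
  rw [show S.fKA = (algebraMap K (AlgebraicClosure K)).comp S.integers.subtype from rfl,
    ← Polynomial.map_map, Polynomial.eval_map]
  rw [Polynomial.aeval_def] at ha
  exact ha

lemma exists_close_root (P : Polynomial S.integers) (hm : P.Monic) (t : 𝔸) (ht : 0 ≤ S.v t)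
    (hpos : 0 < S.v (Polynomial.eval₂ S.fKA t P)) :
    ∃ a ∈ (P.map S.fKA).roots, 0 < S.v (t - a) := by
  rw [S.eval₂_eq_prod_roots P hm t] at hpos
  have h0 : ∀ x ∈ ((P.map S.fKA).roots).map (fun a => t - a), 0 ≤ S.v x := by
    rintro x hx
    obtain ⟨a, ha, rfl⟩ := Multiset.mem_map.mp hx
    have hna : 0 ≤ S.v (-a) := by
      rw [S.v_neg]; exact S.root_nonneg_of_mem_roots P hm ha
    rw [sub_eq_add_neg]
    exact S.v_add_nonneg ht hna
  obtain ⟨x, hx, hxpos⟩ := S.exists_pos_of_v_prod_pos _ h0 hpos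
  obtain ⟨a, ha, rfl⟩ := Multiset.mem_map.mp hx
  exact ⟨a, ha, hxpos⟩

lemma v_eval₂_pos_of_close (P : Polynomial S.integers) (hm : P.Monic) (t : 𝔸)
    (ht : 0 ≤ S.v t) {β : 𝔸} (hβ : β ∈ (P.map S.fKA).roots) (hc : 0 < S.v (t - β)) :
    0 < S.v (Polynomial.eval₂ S.fKA t P) := by
  rw [S.eval₂_eq_prod_roots P hm t]
  refine S.v_prod_pos_of_mem _ (Multiset.mem_map_of_mem _ hβ) hc ?_
  rintro x hx
  obtain ⟨a, ha, rfl⟩ := Multiset.mem_map.mp hx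
  have hna : 0 ≤ S.v (-a) := by
    rw [S.v_neg]; exact S.root_nonneg_of_mem_roots P hm ha
  rw [sub_eq_add_neg]
  exact S.v_add_nonneg ht hna

lemma coeff_mem_of_reduce_eq_zero {P : Polynomial S.integers} (h : S.reduce P = 0) (i : ℕ) :
    P.coeff i ∈ S.maximalIdeal := by
  have h2 : (S.reduce P).coeff i = 0 := by rw [h]; simp
  unfold reduce at h2
  rw [Polynomial.coeff_map] at h2
  exact Ideal.Quotient.eq_zero_iff_mem.mp h2

lemma exists_root_resC (p : Polynomial (S.OC ⧸ S.mC)) (hp : p.Monic) (hd : p.natDegree ≠ 0) :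
    ∃ ξ, Polynomial.eval ξ p = 0 := by
  haveI hmax := S.mC_isMaximal
  haveI : Nontrivial (S.OC ⧸ S.mC) := Ideal.Quotient.nontrivial_iff.mpr hmax.ne_top
  obtain ⟨P, hPm, hPmap, hPdeg⟩ := exists_monic_preimage S.mC p hp
  have hmono : (P.map S.OC.subtype).Monic := hPm.map _
  have hdeg0 : (P.map S.OC.subtype).degree ≠ 0 := by
    have hnd : (P.map S.OC.subtype).natDegree = p.natDegree := by
      rw [hPm.natDegree_map]; exact hPdeg
    intro hcon
    apply hd
    rw [← hnd]
    rw [Polynomial.natDegree_eq_zero_iff_degree_le_zero, hcon]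
  obtain ⟨y, hy⟩ := IsAlgClosed.exists_root (P.map S.OC.subtype) hdeg0
  have hy0 : 0 ≤ S.v y :=
    S.v_root_nonneg _ hmono (fun i => by rw [Polynomial.coeff_map]; exact (P.coeff i).2) hy
  refine ⟨Ideal.Quotient.mk S.mC ⟨y, hy0⟩, ?_⟩
  rw [← hPmap, Polynomial.eval_map, Polynomial.eval₂_at_apply]
  have hz : Polynomial.eval (⟨y, hy0⟩ : S.OC) P = 0 := by
    apply Subtype.ext
    show S.OC.subtype (Polynomial.eval (⟨y, hy0⟩ : S.OC) P) = (0 : 𝔸)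
    have h2 : Polynomial.eval (S.OC.subtype ⟨y, hy0⟩) (P.map S.OC.subtype)
        = S.OC.subtype (Polynomial.eval (⟨y, hy0⟩ : S.OC) P) := by
      rw [Polynomial.eval_map, Polynomial.eval₂_at_apply]
    rw [← h2]
    exact hy
  rw [hz, map_zero]

lemma v_algEquiv (σ : 𝔸 ≃ₐ[K] 𝔸) (x : 𝔸) : S.v (σ x) = S.v x := by
  let e : (⊤ : IntermediateField K 𝔸) ≃ₐ[K] (⊤ : IntermediateField K 𝔸) :=
    IntermediateField.topEquiv.trans (σ.trans IntermediateField.topEquiv.symm)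
  have h := S.v_aut_invariant ⊤ e ⟨x, trivial⟩
  have h1 : ((e ⟨x, trivial⟩ : (⊤ : IntermediateField K 𝔸)) : AlgebraicClosure K) = σ x := by
    rfl
  rw [h1] at h
  exact h

lemma v_sum_nonneg {ι : Type*} (s : Finset ι) (f : ι → 𝔸) (h : ∀ i ∈ s, 0 ≤ S.v (f i)) :
    0 ≤ S.v (∑ i ∈ s, f i) := by
  induction s using Finset.cons_induction with
  | empty => rw [Finset.sum_empty, S.v_zero]; exact le_top
  | cons a s ha ih =>
      rw [Finset.sum_cons]
      exact S.v_add_nonneg (h _ (Finset.mem_cons_self _ _))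
        (ih fun i hi => h i (Finset.mem_cons_of_mem hi))

lemma v_eval₂_nonneg (P : Polynomial S.integers) {t : 𝔸} (ht : 0 ≤ S.v t) :
    0 ≤ S.v (Polynomial.eval₂ S.fKA t P) := by
  rw [Polynomial.eval₂_eq_sum_range]
  refine S.v_sum_nonneg _ _ ?_
  intro i _
  rw [S.v_mul]
  exact add_nonneg (S.v_fKA_nonneg _) (S.v_pow_nonneg ht i)

lemma aeval_of_mem_roots (P : Polynomial S.integers) {a : 𝔸}
    (ha : a ∈ (P.map S.fKA).roots) : Polynomial.aeval a (P.map S.integers.subtype) = 0 := by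
  have h := (Polynomial.mem_roots'.mp ha).2
  rw [Polynomial.aeval_def, ← Polynomial.eval_map, Polynomial.map_map]
  exact h

lemma eval₂_fKA_eq_aeval (P : Polynomial S.integers) (t : 𝔸) :
    Polynomial.eval₂ S.fKA t P = Polynomial.aeval t (P.map S.integers.subtype) := by
  rw [Polynomial.aeval_def, Polynomial.eval₂_eq_eval_map, Polynomial.eval₂_eq_eval_map,
    Polynomial.map_map]
  rfl

lemma reduce_monic {P : Polynomial S.integers} (h : P.Monic) : (S.reduce P).Monic :=
  h.map _

lemma reduce_natDegree {P : Polynomial S.integers} (h : P.Monic) :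
    (S.reduce P).natDegree = P.natDegree := by
  haveI : Nontrivial S.Residue := Ideal.Quotient.nontrivial_iff.mpr S.maximalIdeal_isMaximal.ne_top
  exact h.natDegree_map _

lemma monic_of_map_subtype {P : Polynomial S.integers} (h : (P.map S.integers.subtype).Monic) :
    P.Monic := by
  have hinj : Function.Injective S.integers.subtype := Subtype.coe_injective
  have hlc := Polynomial.leadingCoeff_map_of_injective hinj P
  apply hinj
  rw [map_one, ← hlc]
  exact h

end OkutsuSetup

open OkutsuSetup in
/-- Let `F ∈ 𝓞[x]` be monic irreducible of degree `n` with root `θ`,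
of depth `r ≥ 1`, and `[F_1, …, F_r]` an Okutsu frame of `F`.  Then `F_1` is irreducible
modulo `𝔪`, `m_1 ∣ n`, and `F ≡ F_1 ^ (n / m_1) (mod 𝔪)`. -/
theorem okutsu_stmt_2 {K : Type} [Field K] [CharZero K] (S : OkutsuSetup K)
    (F : Polynomial S.integers) (hFmonic : F.Monic)
    (hFirr : Irreducible (F.map S.integers.subtype))
    (n : ℕ) (hFdeg : F.natDegree = n)
    (θ : AlgebraicClosure K) (hθ : S.evalK F θ = 0)
    (D : OkutsuData S θ n) (hr : 1 ≤ D.r)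
    (Fr : ℕ → Polynomial S.integers) (hFr : S.IsFrame D Fr) :
    Irreducible (S.reduce (Fr 1)) ∧ D.m 1 ∣ n ∧
      S.reduce F = S.reduce (Fr 1) ^ (n / D.m 1) := by
  classical
  obtain ⟨α, hαdeg, hαv, hαmap⟩ := hFr 1 le_rfl hr
  set F1 := Fr 1 with hF1def
  haveI hmax := S.maximalIdeal_isMaximal
  haveI : Nontrivial S.Residue := Ideal.Quotient.nontrivial_iff.mpr hmax.ne_top
  letI : Field S.Residue := Ideal.Quotient.field S.maximalIdeal
  haveI hmaxC := S.mC_isMaximal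
  haveI : Nontrivial (S.OC ⧸ S.mC) := Ideal.Quotient.nontrivial_iff.mpr hmaxC.ne_top
  letI : Field (S.OC ⧸ S.mC) := Ideal.Quotient.field S.mC
  letI : Algebra S.Residue (S.OC ⧸ S.mC) := S.resMap.toAlgebra
  -- facts about θ
  have hθint : IsIntegral K θ := (Algebra.IsAlgebraic.isAlgebraic (R := K) θ).isIntegral
  have hαint : IsIntegral K α := (Algebra.IsAlgebraic.isAlgebraic (R := K) α).isIntegral
  have hFmonic' : (F.map S.integers.subtype).Monic := hFmonic.map _
  have hθaev : Polynomial.aeval θ (F.map S.integers.subtype) = 0 := hθ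
  have hminθ : minpoly K θ = F.map S.integers.subtype :=
    (minpoly.eq_of_irreducible_of_monic hFirr hθaev hFmonic').symm
  have hθroots : θ ∈ (F.map S.fKA).roots := S.mem_roots_of_aeval F hFmonic hθaev
  have hθ0 : 0 ≤ S.v θ := S.root_nonneg_of_mem_roots F hFmonic hθroots
  -- facts about α and F1
  have hF1monic : F1.Monic := S.monic_of_map_subtype (by rw [hαmap]; exact minpoly.monic hαint)
  have hαaev : Polynomial.aeval α (F1.map S.integers.subtype) = 0 := by
    rw [hαmap]; exact minpoly.aeval K α
  have hαroots : α ∈ (F1.map S.fKA).roots := S.mem_roots_of_aeval F1 hF1monic hαaev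
  have hα0 : 0 ≤ S.v α := S.root_nonneg_of_mem_roots F1 hF1monic hαroots
  have hF1nd : F1.natDegree = D.m 1 := by
    rw [← hF1monic.natDegree_map S.integers.subtype, hαmap, hαdeg]
  -- μ 1 > 0
  have hμpos : (0 : WithTop ℚ) < D.μ 1 := by
    obtain ⟨⟨η, hη1, hη2⟩, _⟩ := D.m_isLeast 1 le_rfl (by omega)
    obtain ⟨_, hub⟩ := D.mu_isGreatest 1 le_rfl (by omega)
    rw [show (1 : ℕ) - 1 = 0 from rfl, D.mu_zero] at hη2
    exact lt_of_lt_of_le hη2 (hub ⟨η, hη1, rfl⟩)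
  have hθα : 0 < S.v (θ - α) := by rw [hαv]; exact hμpos
  have hm1pos : 1 ≤ D.m 1 := by
    rw [← hαdeg]; exact minpoly.natDegree_pos hαint
  have hm1lt : D.m 1 < n := D.m_lt_n 1 le_rfl hr
  have hm1least : ∀ η : AlgebraicClosure K, 0 < S.v (θ - η) → D.m 1 ≤ (minpoly K η).natDegree := by
    intro η hη
    obtain ⟨_, hlb⟩ := D.m_isLeast 1 le_rfl (by omega)
    refine hlb ⟨η, rfl, ?_⟩
    rw [show (1 : ℕ) - 1 = 0 from rfl, D.mu_zero]
    exact hη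
  -- the contradiction machine: no monic polynomial of degree < m 1 can be
  -- `v`-close to α
  have hcontra : ∀ p : Polynomial S.integers, p.Monic → p.natDegree < D.m 1 →
      0 < S.v (Polynomial.eval₂ S.fKA α p) → False := by
    intro p hpm hpd hppos
    obtain ⟨β, hβroots, hβclose⟩ := S.exists_close_root p hpm α hα0 hppos
    have hθβ : 0 < S.v (θ - β) := by
      have hsplit : θ - β = (θ - α) + (α - β) := by ring
      rw [hsplit]
      exact S.v_add_pos hθα hβclose
    have h1 := hm1least β hθβ
    have h2 := S.minpoly_natDegree_le_of_root p hpm hβroots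
    omega
  -- Claim 1 : reduce F1 is irreducible
  have keyA : Irreducible (S.reduce F1) := by
    by_contra hnot
    have hredmonic : (S.reduce F1).Monic := hF1monic.map _
    have hrednd : (S.reduce F1).natDegree = D.m 1 := by
      rw [S.reduce_natDegree hF1monic, hF1nd]
    have hnotunit : ¬IsUnit (S.reduce F1) :=
      Polynomial.not_isUnit_of_natDegree_pos _ (by omega)
    rw [irreducible_iff] at hnot
    push_neg at hnot
    obtain ⟨a, b, hab, hnua, hnub⟩ := hnot hnotunit
    have ha0 : a ≠ 0 := by
      intro h; rw [h, zero_mul] at hab; exact hredmonic.ne_zero hab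
    have hb0 : b ≠ 0 := by
      intro h; rw [h, mul_zero] at hab; exact hredmonic.ne_zero hab
    have hdeg : a.natDegree + b.natDegree = D.m 1 := by
      rw [← Polynomial.natDegree_mul ha0 hb0, ← hab, hrednd]
    have hda : 1 ≤ a.natDegree := by
      rcases Nat.eq_zero_or_pos a.natDegree with h | h
      · exfalso
        obtain ⟨c, hc⟩ := Polynomial.natDegree_eq_zero.mp h
        have hc0 : c ≠ 0 := by
          intro h'; rw [h', map_zero] at hc; exact ha0 hc.symm
        exact hnua (by rw [← hc]; exact Polynomial.isUnit_C.mpr hc0.isUnit)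
      · exact h
    have hdb : 1 ≤ b.natDegree := by
      rcases Nat.eq_zero_or_pos b.natDegree with h | h
      · exfalso
        obtain ⟨c, hc⟩ := Polynomial.natDegree_eq_zero.mp h
        have hc0 : c ≠ 0 := by
          intro h'; rw [h', map_zero] at hc; exact hb0 hc.symm
        exact hnub (by rw [← hc]; exact Polynomial.isUnit_C.mpr hc0.isUnit)
      · exact h
    set u := a.leadingCoeff with hu
    have hu0 : u ≠ 0 := Polynomial.leadingCoeff_ne_zero.mpr ha0
    have hlcab : a.leadingCoeff * b.leadingCoeff = 1 := by
      have h := hredmonic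
      unfold Polynomial.Monic at h
      rw [hab, Polynomial.leadingCoeff_mul] at h
      exact h
    set a' := a * Polynomial.C u⁻¹ with ha'
    set b' := b * Polynomial.C u with hb'
    have ha'm : a'.Monic := Polynomial.monic_mul_leadingCoeff_inv ha0
    have hb'm : b'.Monic := by
      unfold Polynomial.Monic
      rw [hb', Polynomial.leadingCoeff_mul, Polynomial.leadingCoeff_C, mul_comm]
      exact hlcab
    have hab' : a' * b' = S.reduce F1 := by
      rw [hab, ha', hb']
      calc a * Polynomial.C u⁻¹ * (b * Polynomial.C u)
          = a * b * (Polynomial.C u⁻¹ * Polynomial.C u) := by ring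
        _ = a * b := by
            rw [← Polynomial.C_mul, inv_mul_cancel₀ hu0, Polynomial.C_1, mul_one]
    have hd'a : a'.natDegree = a.natDegree := by
      rw [ha', Polynomial.natDegree_mul ha0 (Polynomial.C_ne_zero.mpr (inv_ne_zero hu0)),
        Polynomial.natDegree_C, add_zero]
    have hd'b : b'.natDegree = b.natDegree := by
      rw [hb', Polynomial.natDegree_mul hb0 (Polynomial.C_ne_zero.mpr hu0),
        Polynomial.natDegree_C, add_zero]
    obtain ⟨g, hgm, hgmap, hgdeg⟩ := exists_monic_preimage S.maximalIdeal a' ha'm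
    obtain ⟨h, hhm, hhmap, hhdeg⟩ := exists_monic_preimage S.maximalIdeal b' hb'm
    by_cases hcase : g * h = F1
    · have hsplit2 : (g.map S.integers.subtype) * (h.map S.integers.subtype)
          = minpoly K α := by
        rw [← Polynomial.map_mul, hcase, hαmap]
      have hirr := minpoly.irreducible hαint
      rcases hirr.isUnit_or_isUnit hsplit2.symm with hu' | hu'
      · refine Polynomial.not_isUnit_of_natDegree_pos _ ?_ hu'
        rw [hgm.natDegree_map, hgdeg, hd'a]
        omega
      · refine Polynomial.not_isUnit_of_natDegree_pos _ ?_ hu'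
        rw [hhm.natDegree_map, hhdeg, hd'b]
        omega
    · have hwred : S.reduce (F1 - g * h) = 0 := by
        unfold OkutsuSetup.reduce
        rw [Polynomial.map_sub, Polynomial.map_mul]
        have : Polynomial.map (Ideal.Quotient.mk S.maximalIdeal) g *
            Polynomial.map (Ideal.Quotient.mk S.maximalIdeal) h =
            Polynomial.map (Ideal.Quotient.mk S.maximalIdeal) F1 := by
          rw [hgmap, hhmap, hab']
          rfl
        rw [this, sub_self]
      have hwcoeff : ∀ i, (F1 - g * h).coeff i ∈ S.maximalIdeal :=
        fun i => S.coeff_mem_of_reduce_eq_zero hwred i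
      have hpos : 0 < S.v (Polynomial.eval₂ S.fKA α (F1 - g * h)) :=
        S.v_eval₂_pos_of_coeff_mem _ hwcoeff hα0
      have hΦF1 : Polynomial.eval₂ S.fKA α F1 = 0 := by
        rw [S.eval₂_fKA_eq_aeval]; exact hαaev
      rw [show Polynomial.eval₂ S.fKA α (F1 - g * h)
          = Polynomial.eval₂RingHom S.fKA α (F1 - g * h) from rfl] at hpos
      rw [map_sub, map_mul] at hpos
      rw [show Polynomial.eval₂RingHom S.fKA α F1 = Polynomial.eval₂ S.fKA α F1 from rfl,
        hΦF1, zero_sub, S.v_neg, show (Polynomial.eval₂RingHom S.fKA α) g *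
          (Polynomial.eval₂RingHom S.fKA α) h
          = Polynomial.eval₂ S.fKA α g * Polynomial.eval₂ S.fKA α h from rfl, S.v_mul] at hpos
      have hga := S.v_eval₂_nonneg g hα0
      have hha := S.v_eval₂_nonneg h hα0
      have hor : 0 < S.v (Polynomial.eval₂ S.fKA α g) ∨
          0 < S.v (Polynomial.eval₂ S.fKA α h) := by
        by_contra hc
        push_neg at hc
        rw [le_antisymm hc.1 hga, le_antisymm hc.2 hha, add_zero] at hpos
        exact lt_irrefl _ hpos
      rcases hor with hp | hp
      · exact hcontra g hgm (by rw [hgdeg, hd'a]; omega) hp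
      · exact hcontra h hhm (by rw [hhdeg, hd'b]; omega) hp
  -- Claim 2 : every monic irreducible factor of reduce F is reduce F1
  have hψmonic : (S.reduce F1).Monic := S.reduce_monic hF1monic
  have hψnd : (S.reduce F1).natDegree = D.m 1 := by rw [S.reduce_natDegree hF1monic, hF1nd]
  have subclaim : ∀ q : Polynomial S.Residue, q.Monic → Irreducible q →
      q ∣ S.reduce F → q = S.reduce F1 := by
    intro q hqm hqirr hqdvd
    have hqnd : q.natDegree ≠ 0 := by
      intro h0
      exact hqirr.not_isUnit (by rw [hqm.natDegree_eq_zero.mp h0]; exact isUnit_one)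
    obtain ⟨ξ, hξ⟩ := S.exists_root_resC (q.map S.resMap) (hqm.map _)
      (by rw [hqm.natDegree_map]; exact hqnd)
    have hξF : Polynomial.eval ξ ((S.reduce F).map S.resMap) = 0 := by
      obtain ⟨w, hw⟩ := hqdvd
      rw [hw, Polynomial.map_mul, Polynomial.eval_mul, hξ, zero_mul]
    obtain ⟨x, hx⟩ := Ideal.Quotient.mk_surjective (I := S.mC) ξ
    have hbx : S.barC x = ξ := hx
    have hvF : 0 < S.v (Polynomial.eval₂ S.fKA (x : AlgebraicClosure K) F) := by
      rw [← S.eval_toOC_coe]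
      have hmem : S.barC (Polynomial.eval x (F.map S.toOC)) = 0 := by
        rw [← S.eval_reduce_resMap, hbx]
        exact hξF
      exact Ideal.Quotient.eq_zero_iff_mem.mp hmem
    obtain ⟨θi, hθiroots, hθiclose⟩ := S.exists_close_root F hFmonic (x : AlgebraicClosure K) x.2 hvF
    have hθi0 : 0 ≤ S.v θi := S.root_nonneg_of_mem_roots F hFmonic hθiroots
    have hθiaev : Polynomial.aeval θi (minpoly K θ) = 0 := by
      rw [hminθ]
      exact S.aeval_of_mem_roots F hθiroots
    obtain ⟨σ, hσ⟩ := minpoly.exists_algEquiv_of_root'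
      (Algebra.IsAlgebraic.isAlgebraic (R := K) θ) hθiaev
    have hσα : 0 < S.v (θi - σ α) := by
      have hsig : θi - σ α = σ (θ - α) := by rw [map_sub, hσ]
      rw [hsig, S.v_algEquiv]
      exact hθα
    have hσαroots : σ α ∈ (F1.map S.fKA).roots := by
      apply S.mem_roots_of_aeval F1 hF1monic
      rw [hαmap]
      have := Polynomial.aeval_algHom_apply (σ : AlgebraicClosure K →ₐ[K] AlgebraicClosure K)
        α (minpoly K α)
      rw [minpoly.aeval, map_zero] at this
      exact this
    have hvF1 : 0 < S.v (Polynomial.eval₂ S.fKA θi F1) :=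
      S.v_eval₂_pos_of_close F1 hF1monic θi hθi0 hσαroots hσα
    set xi : S.OC := ⟨θi, hθi0⟩ with hxi
    have hξxi : S.barC xi = ξ := by
      rw [← hbx]
      apply (Ideal.Quotient.eq (I := S.mC)).mpr
      show (0 : WithTop ℚ) < S.v ((xi - x : S.OC) : AlgebraicClosure K)
      have hco : ((xi - x : S.OC) : AlgebraicClosure K) = -((x : AlgebraicClosure K) - θi) := by
        push_cast [hxi]
        ring
      rw [hco, S.v_neg]
      exact hθiclose
    have hξψ : Polynomial.eval ξ ((S.reduce F1).map S.resMap) = 0 := by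
      rw [← hξxi, S.eval_reduce_resMap]
      have hmem : Polynomial.eval xi (F1.map S.toOC) ∈ S.mC := by
        show (0 : WithTop ℚ) < S.v ((Polynomial.eval xi (F1.map S.toOC) : S.OC) : AlgebraicClosure K)
        rw [S.eval_toOC_coe]
        exact hvF1
      exact Ideal.Quotient.eq_zero_iff_mem.mpr hmem
    have haev_q : Polynomial.aeval ξ q = 0 := by
      rw [Polynomial.aeval_def, Polynomial.eval₂_eq_eval_map]
      exact hξ
    have haev_ψ : Polynomial.aeval ξ (S.reduce F1) = 0 := by
      rw [Polynomial.aeval_def, Polynomial.eval₂_eq_eval_map]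
      exact hξψ
    have h1 := minpoly.eq_of_irreducible_of_monic hqirr haev_q hqm
    have h2 := minpoly.eq_of_irreducible_of_monic keyA haev_ψ hψmonic
    exact h1.trans h2.symm
  -- factorization of reduce F as a power of reduce F1
  have hredF_monic : (S.reduce F).Monic := S.reduce_monic hFmonic
  have hredFnd : (S.reduce F).natDegree = n := by rw [S.reduce_natDegree hFmonic, hFdeg]
  have hfact : ∀ N : ℕ, ∀ P : Polynomial S.Residue, P.natDegree ≤ N → P.Monic →
      (∀ q : Polynomial S.Residue, q.Monic → Irreducible q → q ∣ P → q = S.reduce F1) →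
      ∃ a : ℕ, P = (S.reduce F1) ^ a := by
    intro N
    induction N with
    | zero =>
        intro P hPd hPm _
        have h0 : P.natDegree = 0 := le_antisymm hPd (Nat.zero_le _)
        exact ⟨0, by rw [pow_zero, hPm.natDegree_eq_zero.mp h0]⟩
    | succ N ih =>
        intro P hPd hPm hPq
        by_cases h0 : P.natDegree = 0
        · exact ⟨0, by rw [pow_zero, hPm.natDegree_eq_zero.mp h0]⟩
        · obtain ⟨q, hqm, hqirr, hqdvd⟩ := Polynomial.exists_monic_irreducible_factor P
            (Polynomial.not_isUnit_of_natDegree_pos P (by omega))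
          have hqψ : q = S.reduce F1 := hPq q hqm hqirr hqdvd
          obtain ⟨w, hw⟩ := hqdvd
          have hwm : w.Monic := by
            have hqwm : (q * w).Monic := by rw [← hw]; exact hPm
            exact hqm.of_mul_monic_left hqwm
          have hq1 : 1 ≤ q.natDegree := by
            by_contra h'
            push_neg at h'
            exact hqirr.not_isUnit
              (by rw [hqm.natDegree_eq_zero.mp (by omega)]; exact isUnit_one)
          have hsum : q.natDegree + w.natDegree = P.natDegree := by
            rw [hw, Polynomial.natDegree_mul hqm.ne_zero hwm.ne_zero]
          have hwdeg : w.natDegree ≤ N := by omega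
          have hwP : w ∣ P := ⟨q, by rw [hw]; ring⟩
          obtain ⟨a, haP⟩ := ih w hwdeg hwm
            (fun r hrm hrirr hrdvd => hPq r hrm hrirr (hrdvd.trans hwP))
          exact ⟨a + 1, by rw [hw, hqψ, haP, pow_succ]; ring⟩
  obtain ⟨a, ha⟩ := hfact (S.reduce F).natDegree (S.reduce F) le_rfl hredF_monic subclaim
  have hdeg2 : n = a * D.m 1 := by
    have h' : (S.reduce F).natDegree = a * (S.reduce F1).natDegree := by
      rw [ha, Polynomial.natDegree_pow]
    rw [hredFnd, hψnd] at h'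
    exact h'
  have hdiv : D.m 1 ∣ n := ⟨a, hdeg2.trans (mul_comm a (D.m 1))⟩
  have hquot : n / D.m 1 = a := Nat.div_eq_of_eq_mul_left hm1pos hdeg2
  exact ⟨keyA, hdiv, by rw [hquot, ha]⟩
end
end

section
/- Let F(x) ∈ 𝓞[x] be a monic irreducible polynomial with root θ ∈ K̄, with Okutsu invariants m_i, μ_i and depth r. Fix 1 ≤ i ≤ r+1, and let α, η ∈ K̄ be algebraic integers satisfying v(θ − α) > μ_{i−1} and v(θ − η) > μ_{i−1}. Then, for every nonzero polynomial g(x) ∈ K[x] of degree strictly less than m_i, one has v(g(η) − g(α)) > v(g(α)). -/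
open Polynomial

noncomputable section

section Aux

variable {K : Type} [Field K] [CharZero K] (S : OkutsuSetup K)

lemma OkutsuSetup.v_zero' : S.v 0 = ⊤ := (S.v_eq_top_iff 0).mpr rfl

/-- If `v x < v y` then `v (x + y) = v x`. -/
lemma OkutsuSetup.v_add_eq_left {x y : AlgebraicClosure K} (h : S.v x < S.v y) :
    S.v (x + y) = S.v x := by
  have hge : S.v x ≤ S.v (x + y) := by
    have := S.v_min_le_add x y
    rwa [min_eq_left h.le] at this
  refine le_antisymm ?_ hge
  by_contra hlt
  push_neg at hlt
  have h2 : min (S.v (x + y)) (S.v (-y)) ≤ S.v ((x + y) + -y) := S.v_min_le_add _ _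
  rw [show (x + y) + -y = x by ring, S.v_neg] at h2
  exact absurd h2 (not_le.mpr (lt_min hlt h))

/-- `v` of a finite product is the sum of the values. -/
lemma OkutsuSetup.v_prod (s : Multiset (AlgebraicClosure K)) :
    S.v s.prod = (s.map S.v).sum := by
  induction s using Multiset.induction_on with
  | empty => simpa using S.v_one
  | cons a t ih =>
      rw [Multiset.prod_cons, S.v_mul, Multiset.map_cons, Multiset.sum_cons, ih]

/-- Key telescoping estimate on products of linear factors. -/
lemma OkutsuSetup.key_estimate (L : WithTop ℚ) (θ α η : AlgebraicClosure K)
    (hα : L < S.v (θ - α)) (hη : L < S.v (θ - η))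
    (s : Multiset (AlgebraicClosure K)) (hs : ∀ β ∈ s, S.v (θ - β) ≤ L) :
    S.v ((s.map fun β => α - β).prod) = (s.map fun β => S.v (θ - β)).sum ∧
    (s.map fun β => S.v (θ - β)).sum + S.v (η - α) ≤
      S.v ((s.map fun β => η - β).prod - (s.map fun β => α - β).prod) + L := by
  have hvab : ∀ γ : AlgebraicClosure K, L < S.v (θ - γ) →
      ∀ β ∈ s, S.v (γ - β) = S.v (θ - β) := by
    intro γ hγ β hβ
    have h1 : S.v (θ - β) < S.v (γ - θ) := by
      rw [show γ - θ = -(θ - γ) by ring, S.v_neg]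
      exact lt_of_le_of_lt (hs β hβ) hγ
    have := S.v_add_eq_left h1
    rwa [show (θ - β) + (γ - θ) = γ - β by ring] at this
  constructor
  · rw [S.v_prod, Multiset.map_map]
    congr 1
    exact Multiset.map_congr rfl fun β hβ => hvab α hα β hβ
  · clear hvab
    revert hs
    induction s using Multiset.induction_on with
    | empty =>
        intro hs
        simp only [Multiset.map_zero, Multiset.prod_zero, Multiset.sum_zero, sub_self,
          S.v_zero', zero_add]
        exact le_top.trans (le_of_eq (top_add L).symm)
    | cons β t ih =>
        intro hs
        have hvab : ∀ γ : AlgebraicClosure K, L < S.v (θ - γ) →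
            ∀ β' ∈ β ::ₘ t, S.v (γ - β') = S.v (θ - β') := by
          intro γ hγ β' hβ'
          have h1 : S.v (θ - β') < S.v (γ - θ) := by
            rw [show γ - θ = -(θ - γ) by ring, S.v_neg]
            exact lt_of_le_of_lt (hs β' hβ') hγ
          have := S.v_add_eq_left h1
          rwa [show (θ - β') + (γ - θ) = γ - β' by ring] at this
        have hβmem : β ∈ β ::ₘ t := Multiset.mem_cons_self β t
        have hst : ∀ γ ∈ t, S.v (θ - γ) ≤ L := fun γ hγ => hs γ (Multiset.mem_cons_of_mem hγ)
        have ih' := ih hst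
        set At := (t.map fun γ => α - γ).prod with hAt
        set Ht := (t.map fun γ => η - γ).prod with hHt
        set Vt := (t.map fun γ => S.v (θ - γ)).sum with hVt
        have hvAt : S.v At = Vt := by
          rw [hAt, S.v_prod, Multiset.map_map]
          congr 1
          exact Multiset.map_congr rfl fun γ hγ => hvab α hα γ (Multiset.mem_cons_of_mem hγ)
        simp only [Multiset.map_cons, Multiset.prod_cons, Multiset.sum_cons]
        have hsplit : (η - β) * Ht - (α - β) * At
            = (η - β) * (Ht - At) + (η - α) * At := by ring
        rw [hsplit]
        have hmin : min (S.v ((η - β) * (Ht - At))) (S.v ((η - α) * At)) ≤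
            S.v ((η - β) * (Ht - At) + (η - α) * At) := S.v_min_le_add _ _
        have hterm1 : S.v (θ - β) + Vt + S.v (η - α) ≤ S.v ((η - β) * (Ht - At)) + L := by
          rw [S.v_mul, hvab η hη β hβmem]
          calc S.v (θ - β) + Vt + S.v (η - α)
              = S.v (θ - β) + (Vt + S.v (η - α)) := by rw [add_assoc]
            _ ≤ S.v (θ - β) + (S.v (Ht - At) + L) := add_le_add_right ih' _
            _ = S.v (θ - β) + S.v (Ht - At) + L := by rw [add_assoc]
        have hterm2 : S.v (θ - β) + Vt + S.v (η - α) ≤ S.v ((η - α) * At) + L := by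
          rw [S.v_mul, hvAt]
          calc S.v (θ - β) + Vt + S.v (η - α)
              ≤ L + Vt + S.v (η - α) := by
                exact add_le_add_left (add_le_add_left (hs β hβmem) _) _
            _ = S.v (η - α) + Vt + L := by
                rw [add_comm (L + Vt) (S.v (η - α)), add_comm L Vt, ← add_assoc]
        calc S.v (θ - β) + Vt + S.v (η - α)
            ≤ min (S.v ((η - β) * (Ht - At)) + L) (S.v ((η - α) * At) + L) :=
              le_min hterm1 hterm2
          _ = min (S.v ((η - β) * (Ht - At))) (S.v ((η - α) * At)) + L := min_add_add_right _ _ _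
          _ ≤ S.v ((η - β) * (Ht - At) + (η - α) * At) + L := add_le_add_left hmin _

end Aux

open OkutsuSetup in
/-- Let `F ∈ 𝓞[x]` be monic irreducible with root `θ`, with Okutsu
invariants `m_i, μ_i` and depth `r`.  Fix `1 ≤ i ≤ r + 1` and let `α, η ∈ K̄` be
algebraic integers with `v(θ - α) > μ_{i-1}` and `v(θ - η) > μ_{i-1}`.  Then for every
nonzero `g ∈ K[x]` of degree `< m_i` one has `v(g(η) - g(α)) > v(g(α))`. -/
theorem okutsu_stmt_5 {K : Type} [Field K] [CharZero K] (S : OkutsuSetup K)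
    (F : Polynomial S.integers) (hFmonic : F.Monic)
    (hFirr : Irreducible (F.map S.integers.subtype))
    (n : ℕ) (hFdeg : F.natDegree = n)
    (θ : AlgebraicClosure K) (hθ : S.evalK F θ = 0)
    (D : OkutsuData S θ n)
    (i : ℕ) (hi1 : 1 ≤ i) (hi2 : i ≤ D.r + 1)
    (α η : AlgebraicClosure K) (hαint : 0 ≤ S.v α) (hηint : 0 ≤ S.v η)
    (hαv : D.μ (i - 1) < S.v (θ - α)) (hηv : D.μ (i - 1) < S.v (θ - η))
    (g : Polynomial K) (hg : g ≠ 0) (hgdeg : g.natDegree < D.m i) :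
    S.v (Polynomial.aeval α g) <
      S.v (Polynomial.aeval η g - Polynomial.aeval α g) := by
  classical
  have hLne : D.μ (i - 1) ≠ ⊤ := hαv.ne_top
  set gK : Polynomial (AlgebraicClosure K) := g.map (algebraMap K (AlgebraicClosure K)) with hgK
  have hinj : Function.Injective (algebraMap K (AlgebraicClosure K)) :=
    (algebraMap K (AlgebraicClosure K)).injective
  have hgK0 : gK ≠ 0 := (Polynomial.map_ne_zero_iff hinj).mpr hg
  -- every root β of g has v(θ - β) ≤ L
  have hroot : ∀ β ∈ gK.roots, S.v (θ - β) ≤ D.μ (i - 1) := by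
    intro β hβ
    by_contra hlt
    push_neg at hlt
    have hev : Polynomial.aeval β g = 0 := by
      have := (Polynomial.mem_roots hgK0).mp hβ
      rwa [Polynomial.IsRoot, hgK, Polynomial.eval_map, ← Polynomial.aeval_def] at this
    have hint : IsIntegral K β := Algebra.IsIntegral.isIntegral β
    have hdvd : minpoly K β ∣ g := minpoly.dvd K β hev
    have hdeg : (minpoly K β).natDegree ≤ g.natDegree :=
      Polynomial.natDegree_le_natDegree (Polynomial.degree_le_of_dvd hdvd hg)
    have := (D.m_isLeast i hi1 hi2).2 ⟨β, rfl, hlt⟩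
    omega
  -- g(α) ≠ 0
  have hgα : Polynomial.aeval α g ≠ 0 := by
    intro h0
    have hdvd : minpoly K α ∣ g := minpoly.dvd K α h0
    have hdeg : (minpoly K α).natDegree ≤ g.natDegree :=
      Polynomial.natDegree_le_natDegree (Polynomial.degree_le_of_dvd hdvd hg)
    have := (D.m_isLeast i hi1 hi2).2 ⟨α, rfl, hαv⟩
    omega
  -- factor gK
  have hsplit : gK.Splits :=
    IsAlgClosed.splits gK
  have hfact : gK = Polynomial.C gK.leadingCoeff *
      (gK.roots.map fun a => Polynomial.X - Polynomial.C a).prod :=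
    hsplit.eq_prod_roots
  set c := gK.leadingCoeff with hc
  set s := gK.roots with hsdef
  have heval : ∀ x : AlgebraicClosure K, Polynomial.aeval x g = c * (s.map fun β => x - β).prod := by
    intro x
    rw [Polynomial.aeval_def, ← Polynomial.eval_map, ← hgK]
    conv_lhs => rw [hfact]
    rw [Polynomial.eval_mul, Polynomial.eval_C, Polynomial.eval_multiset_prod,
      Multiset.map_map]
    congr 1
    refine congrArg Multiset.prod (Multiset.map_congr rfl fun β hβ => ?_)
    simp
  have hkey := S.key_estimate (D.μ (i - 1)) θ α η hαv hηv s hroot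
  obtain ⟨hA, hmain⟩ := hkey
  set As := (s.map fun β => α - β).prod with hAs
  set Hs := (s.map fun β => η - β).prod with hHs
  set Vs := (s.map fun β => S.v (θ - β)).sum with hVs
  have hvc : S.v ((algebraMap K (AlgebraicClosure K)) (g.leadingCoeff)) ≠ ⊤ := by
    rw [ne_eq, S.v_eq_top_iff]
    simp [Polynomial.leadingCoeff_ne_zero.mpr hg]
  have hcval : c = (algebraMap K (AlgebraicClosure K)) g.leadingCoeff := by
    rw [hc, hgK, Polynomial.leadingCoeff_map_of_leadingCoeff_ne_zero]
    simp [Polynomial.leadingCoeff_ne_zero.mpr hg]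
  have hvcne : S.v c ≠ ⊤ := by rw [hcval]; exact hvc
  -- v(g(α)) = v c + Vs
  have hvgα : S.v (Polynomial.aeval α g) = S.v c + Vs := by
    rw [heval α, S.v_mul, hA]
  have hVsne : Vs ≠ ⊤ := by
    intro h
    rw [h, add_top] at hvgα
    exact hgα ((S.v_eq_top_iff _).mp hvgα)
  -- v(η - α) > L
  have hηα : D.μ (i - 1) < S.v (η - α) := by
    have h1 : min (S.v (η - θ)) (S.v (θ - α)) ≤ S.v ((η - θ) + (θ - α)) := S.v_min_le_add _ _
    rw [show (η - θ) + (θ - α) = η - α by ring] at h1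
    refine lt_of_lt_of_le ?_ h1
    have h2 : S.v (η - θ) = S.v (θ - η) := by
      rw [show η - θ = -(θ - η) by ring, S.v_neg]
    rw [h2]
    exact lt_min hηv hαv
  -- conclude Vs < v(Hs - As)
  have hstep : Vs + D.μ (i - 1) < S.v (Hs - As) + D.μ (i - 1) :=
    lt_of_lt_of_le (WithTop.add_lt_add_left hVsne hηα) hmain
  have hVslt : Vs < S.v (Hs - As) := by
    rwa [WithTop.add_lt_add_iff_right hLne] at hstep
  have hdiff : Polynomial.aeval η g - Polynomial.aeval α g = c * (Hs - As) := by
    rw [heval η, heval α]; ring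
  rw [hdiff, S.v_mul, hvgα]
  exact WithTop.add_lt_add_left hvcne hVslt
end
end
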